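/- If $n = 2m$ is even, then the kernel of the adjacency matrix of $Q_n$ over $\mathbb{Q}$ has dimension $\binom{n}{m}$. -/

import Mathlib

/-- The adjacency matrix of the `n`-cube graph `Qₙ`: vertices are elements of `{0,1}ⁿ`,
two vertices are adjacent iff they differ in exactly one coordinate. -/
def cubeAdj (n : ℕ) : Matrix (Fin n → Bool) (Fin n → Bool) ℤ :=
  fun u v => if (Finset.univ.filter fun i => u i ≠ v i).card = 1 then 1 else 0

open Finset Matrix

/-- The character (Hadamard) matrix. -/
noncomputable def chiM (n : ℕ) : Matrix (Fin n → Bool) (Fin n → Bool) ℚ :=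
  fun u S => ∏ i, if u i && S i then -1 else 1

/-- The eigenvalues of the cube adjacency matrix. -/
noncomputable def dVec (n : ℕ) : (Fin n → Bool) → ℚ :=
  fun S => (n : ℚ) - 2 * ((Finset.univ.filter fun i => S i = true).card : ℚ)

lemma chi_mul_chi (n : ℕ) : chiM n * chiM n = (2 ^ n : ℚ) • 1 := by
  ext u v
  rw [Matrix.mul_apply]
  simp only [chiM]
  have h1 : ∀ S : Fin n → Bool,
      (∏ i, (if u i && S i then (-1 : ℚ) else 1)) * (∏ i, if S i && v i then (-1 : ℚ) else 1)
        = ∏ i, ((if u i && S i then (-1 : ℚ) else 1) * (if S i && v i then (-1 : ℚ) else 1)) :=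
    fun S => (Finset.prod_mul_distrib).symm
  simp_rw [h1]
  rw [← Fintype.prod_sum fun i b => (if u i && b then (-1 : ℚ) else 1) *
    (if b && v i then (-1 : ℚ) else 1)]
  have h2 : ∀ i : Fin n,
      (∑ b : Bool, (if u i && b then (-1 : ℚ) else 1) * (if b && v i then (-1 : ℚ) else 1))
        = if u i = v i then 2 else 0 := by
    intro i
    cases hu : u i <;> cases hv : v i <;> simp [Fintype.sum_bool] <;> norm_num
  rw [Finset.prod_congr rfl fun i _ => h2 i]
  by_cases huv : u = v
  · subst huv
    simp [Matrix.one_apply, Finset.prod_const]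
  · obtain ⟨i, hi⟩ : ∃ i, u i ≠ v i := by
      by_contra hc
      push_neg at hc
      exact huv (funext hc)
    rw [Finset.prod_eq_zero (Finset.mem_univ i) (by simp [hi])]
    simp [Matrix.one_apply, huv]

lemma filter_update (n : ℕ) (u : Fin n → Bool) (i : Fin n) :
    (Finset.univ.filter fun j => u j ≠ Function.update u i (!u i) j) = {i} := by
  ext j
  simp only [Finset.mem_filter, Finset.mem_univ, true_and, Finset.mem_singleton]
  constructor
  · intro hj
    by_contra hji
    rw [Function.update_of_ne hji] at hj
    exact hj rfl
  · rintro rfl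
    simp

lemma chi_update (n : ℕ) (u S : Fin n → Bool) (i : Fin n) :
    chiM n (Function.update u i (!u i)) S = (if S i then (-1 : ℚ) else 1) * chiM n u S := by
  unfold chiM
  rw [← Finset.prod_erase_mul Finset.univ _ (Finset.mem_univ i),
    ← Finset.prod_erase_mul Finset.univ
      (fun j => if u j && S j then (-1 : ℚ) else 1) (Finset.mem_univ i)]
  have h1 : ∀ j ∈ Finset.univ.erase i,
      (if Function.update u i (!u i) j && S j then (-1 : ℚ) else 1)
        = (if u j && S j then (-1 : ℚ) else 1) := by
    intro j hj
    rw [Function.update_of_ne (Finset.ne_of_mem_erase hj)]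
  rw [Finset.prod_congr rfl h1, Function.update_self]
  cases hu : u i <;> cases hs : S i <;> simp

lemma adj_mul_chi (n : ℕ) :
    (cubeAdj n).map ((↑) : ℤ → ℚ) * chiM n = chiM n * Matrix.diagonal (dVec n) := by
  ext u S
  rw [Matrix.mul_apply, Matrix.mul_diagonal]
  have hA : ∀ v, ((cubeAdj n).map ((↑) : ℤ → ℚ)) u v
      = if (Finset.univ.filter fun i => u i ≠ v i).card = 1 then 1 else 0 := by
    intro v
    simp [cubeAdj, Matrix.map_apply, apply_ite ((↑) : ℤ → ℚ)]
  simp_rw [hA, ite_mul, one_mul, zero_mul]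
  rw [← Finset.sum_filter]
  have himg : (Finset.univ.filter fun v => (Finset.univ.filter fun i => u i ≠ v i).card = 1)
      = Finset.image (fun i => Function.update u i (!u i)) Finset.univ := by
    ext v
    simp only [Finset.mem_filter, Finset.mem_univ, true_and, Finset.mem_image]
    constructor
    · intro hv
      obtain ⟨i0, hi0⟩ := Finset.card_eq_one.mp hv
      refine ⟨i0, ?_⟩
      have hm : ∀ j, u j ≠ v j ↔ j = i0 := by
        intro j
        constructor
        · intro hj
          have : j ∈ (Finset.univ.filter fun i => u i ≠ v i) := by simp [hj]
          rw [hi0] at this; simpa using this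
        · intro hj
          subst hj
          have : j ∈ (Finset.univ.filter fun i => u i ≠ v i) := by rw [hi0]; simp
          simpa using this
      funext j
      by_cases hj : j = i0
      · subst hj
        rw [Function.update_self]
        have := (hm j).mpr rfl
        cases hv' : v j <;> cases hu' : u j <;> simp_all
      · rw [Function.update_of_ne hj]
        by_contra hc
        exact hj ((hm j).mp hc)
    · rintro ⟨i, rfl⟩
      rw [filter_update]
      simp
  rw [himg, Finset.sum_image ?hinj]
  case hinj =>
    intro i _ j _ hij
    by_contra hne
    have := congrFun hij i
    beta_reduce at this
    rw [Function.update_self, Function.update_of_ne hne] at this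
    cases h' : u i <;> simp_all
  simp_rw [chi_update]
  rw [← Finset.sum_mul, mul_comm (chiM n u S)]
  congr 1
  -- ∑ i, (if S i then -1 else 1) = dVec n S
  rw [Finset.sum_ite, Finset.sum_const, Finset.sum_const]
  have hint : (Finset.univ.filter fun i => ¬ (S i = true)).card
      = n - (Finset.univ.filter fun i => S i = true).card := by
    rw [Finset.filter_not, Finset.card_sdiff_of_subset (Finset.filter_subset _ _)]
    simp
  have hle : (Finset.univ.filter fun i => S i = true).card ≤ n := by
    simpa using Finset.card_filter_le Finset.univ (fun i => S i = true)
  rw [hint]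
  unfold dVec
  simp only [nsmul_eq_mul, Nat.cast_sub hle]
  ring

theorem stmt5 (n m : ℕ) (h : n = 2 * m) :
    Module.finrank ℚ
      (LinearMap.ker (Matrix.mulVecLin ((cubeAdj n).map ((↑) : ℤ → ℚ)))) = n.choose m := by
  classical
  have hdet : IsUnit (chiM n).det := by
    have h2 : (chiM n) * ((2 ^ n : ℚ)⁻¹ • chiM n) = 1 := by
      rw [Matrix.mul_smul, chi_mul_chi, smul_smul,
        inv_mul_cancel₀ (by positivity : (2 ^ n : ℚ) ≠ 0), one_smul]
    exact Matrix.isUnit_det_of_right_inverse h2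
  have hrank : ((cubeAdj n).map ((↑) : ℤ → ℚ)).rank = (Matrix.diagonal (dVec n)).rank := by
    rw [← Matrix.rank_mul_eq_left_of_isUnit_det (chiM n) _ hdet, adj_mul_chi,
      Matrix.rank_mul_eq_right_of_isUnit_det _ _ hdet]
  have hval : ∀ S : Fin n → Bool,
      dVec n S = 0 ↔ (Finset.univ.filter fun i => S i = true).card = m := by
    intro S
    unfold dVec
    rw [sub_eq_zero]
    constructor
    · intro hh
      have : (n : ℚ) = ((2 * (Finset.univ.filter fun i => S i = true).card : ℕ) : ℚ) := by
        push_cast; linarith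
      have hn : n = 2 * (Finset.univ.filter fun i => S i = true).card := by exact_mod_cast this
      omega
    · intro hh
      rw [hh]
      push_cast [h]
      ring
  have hcard0 : Fintype.card {S : Fin n → Bool // dVec n S = 0} = n.choose m := by
    have e : {S : Fin n → Bool // dVec n S = 0} ≃ {s : Finset (Fin n) // s.card = m} :=
      { toFun := fun S => ⟨Finset.univ.filter (fun i => S.1 i = true), (hval S.1).mp S.2⟩
        invFun := fun s => ⟨fun i => i ∈ s.1, by
          rw [hval]
          have : (Finset.univ.filter fun i => (decide (i ∈ s.1)) = true) = s.1 := by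
            ext i; simp
          rw [this]; exact s.2⟩
        left_inv := fun S => by
          ext i
          simp
        right_inv := fun s => by
          ext i
          simp }
    rw [Fintype.card_congr e, Fintype.card_finset_len]
    simp
  have hrd := Matrix.rank_diagonal (dVec n)
  have hle := Fintype.card_subtype_le (fun S : Fin n → Bool => dVec n S = 0)
  have htot : Module.finrank ℚ ((Fin n → Bool) → ℚ) = 2 ^ n := by
    simp [Module.finrank_pi]
  have hTcard : Fintype.card (Fin n → Bool) = 2 ^ n := by simp
  have hcompl : Fintype.card {S : Fin n → Bool // dVec n S ≠ 0} = 2 ^ n - n.choose m := by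
    rw [Fintype.card_subtype_compl, hTcard, hcard0]
  have hrn := LinearMap.finrank_range_add_finrank_ker
    (((cubeAdj n).map ((↑) : ℤ → ℚ)).mulVecLin)
  rw [htot] at hrn
  have hr2 : Module.finrank ℚ
      (LinearMap.range (((cubeAdj n).map ((↑) : ℤ → ℚ)).mulVecLin))
      = Fintype.card {S : Fin n → Bool // dVec n S ≠ 0} := by
    rw [← hrd, ← hrank, Matrix.rank]
  have hchoose_le : n.choose m ≤ 2 ^ n := by
    rw [← hcard0]; rw [hTcard] at hle; exact hle
  rw [hr2, hcompl] at hrn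
  omega
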